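/- Let Ψ : ℝ⁴ → ℂ⁴ be a Dirac solution for the 4-potential a = (a₀,a₁,a₂,a₃) and mass κ. Then at every point of ℝ⁴ the following identity holds: 2a₀·(Ψ*δ₄Ψ) + 2κ·(Ψ*Ψ) = −∂₁(Ψ*δ₁Ψ) − ∂₂(Ψ*δ₂Ψ) − ∂₃(Ψ*δ₃Ψ) + i·∂₀↔(Ψ*δ₄Ψ). -/

import Mathlib

noncomputable section

open Complex Matrix MeasureTheory

/-- The Dirac matrix γ₁ in the standard representation. -/
def γ1 : Matrix (Fin 4) (Fin 4) ℂ := !![0,0,0,-I; 0,0,-I,0; 0,I,0,0; I,0,0,0]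
/-- The Dirac matrix γ₂ in the standard representation. -/
def γ2 : Matrix (Fin 4) (Fin 4) ℂ := !![0,0,0,-1; 0,0,1,0; 0,1,0,0; -1,0,0,0]
/-- The Dirac matrix γ₃ in the standard representation. -/
def γ3 : Matrix (Fin 4) (Fin 4) ℂ := !![0,0,-I,0; 0,0,0,I; I,0,0,0; 0,-I,0,0]
/-- The Dirac matrix γ₄ in the standard representation. -/
def γ4 : Matrix (Fin 4) (Fin 4) ℂ := !![1,0,0,0; 0,1,0,0; 0,0,-1,0; 0,0,0,-1]
/-- γ₅ = γ₁γ₂γ₃γ₄. -/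
def γ5 : Matrix (Fin 4) (Fin 4) ℂ := γ1 * γ2 * γ3 * γ4
/-- δ₁ = γ₁ + γ₅γ₁. -/
def δ1 : Matrix (Fin 4) (Fin 4) ℂ := γ1 + γ5 * γ1
/-- δ₂ = γ₂ + γ₅γ₂. -/
def δ2 : Matrix (Fin 4) (Fin 4) ℂ := γ2 + γ5 * γ2
/-- δ₃ = γ₃ + γ₅γ₃. -/
def δ3 : Matrix (Fin 4) (Fin 4) ℂ := γ3 + γ5 * γ3
/-- δ₄ = γ₄ + γ₅γ₄. -/
def δ4 : Matrix (Fin 4) (Fin 4) ℂ := γ4 + γ5 * γ4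

/-- The sesquilinear form v* M v (v a column vector, v* its conjugate transpose). -/
def qc (M : Matrix (Fin 4) (Fin 4) ℂ) (v : Fin 4 → ℂ) : ℂ := star v ⬝ᵥ M.mulVec v
/-- The bilinear form vᵀ M v (v a column vector, vᵀ its transpose). -/
def qt (M : Matrix (Fin 4) (Fin 4) ℂ) (v : Fin 4 → ℂ) : ℂ := v ⬝ᵥ M.mulVec v

/-- The partial derivative ∂_μ of a spinor field on ℝ⁴. -/
def pd (μ : Fin 4) (Ψ : (Fin 4 → ℝ) → Fin 4 → ℂ) (x : Fin 4 → ℝ) : Fin 4 → ℂ :=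
  fderiv ℝ Ψ x (Pi.single μ 1)

/-- The partial derivative ∂_μ of a complex scalar field on ℝ⁴. -/
def pds (μ : Fin 4) (g : (Fin 4 → ℝ) → ℂ) (x : Fin 4 → ℝ) : ℂ :=
  fderiv ℝ g x (Pi.single μ 1)

/-- The bidirectional derivative ∂_μ↔(Ψ* M Ψ) := Ψ* M (∂_μΨ) − (∂_μΨ)* M Ψ. -/
def bd (μ : Fin 4) (M : Matrix (Fin 4) (Fin 4) ℂ) (Ψ : (Fin 4 → ℝ) → Fin 4 → ℂ)
    (x : Fin 4 → ℝ) : ℂ :=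
  star (Ψ x) ⬝ᵥ M.mulVec (pd μ Ψ x) - star (pd μ Ψ x) ⬝ᵥ M.mulVec (Ψ x)

/-- Ψ is a Dirac solution for the 4-potential (a₀,a₁,a₂,a₃) and mass κ:
Ψ is differentiable and Σ_{μ=1}^{3} γ_μ(∂_μΨ − i a_μΨ) − i γ₄(∂₀Ψ + i a₀Ψ) + κΨ = 0 on ℝ⁴. -/
def DiracSolution (Ψ : (Fin 4 → ℝ) → Fin 4 → ℂ)
    (a0 a1 a2 a3 : (Fin 4 → ℝ) → ℝ) (κ : ℝ) : Prop :=
  Differentiable ℝ Ψ ∧ ∀ x : Fin 4 → ℝ,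
    γ1.mulVec (pd 1 Ψ x - (I * (a1 x : ℂ)) • Ψ x)
      + γ2.mulVec (pd 2 Ψ x - (I * (a2 x : ℂ)) • Ψ x)
      + γ3.mulVec (pd 3 Ψ x - (I * (a3 x : ℂ)) • Ψ x)
      - I • γ4.mulVec (pd 0 Ψ x + (I * (a0 x : ℂ)) • Ψ x)
      + (κ : ℂ) • Ψ x = 0


lemma γ5_eq : γ5 = !![0, 0, -1, 0; 0, 0, 0, -1; -1, 0, 0, 0; 0, -1, 0, 0] := by
  ext i j
  fin_cases i <;> fin_cases j <;>
    first
      | rfl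
      | (simp [γ5, γ1, γ2, γ3, γ4, Matrix.mul_apply, Fin.sum_univ_four]; try rfl)

lemma δ1_eq : δ1 = !![0, -I, 0, -I; -I, 0, -I, 0; 0, I, 0, I; I, 0, I, 0] := by
  ext i j
  fin_cases i <;> fin_cases j <;>
    first
      | rfl
      | (simp [δ1, γ5_eq, γ1, Matrix.mul_apply, Fin.sum_univ_four]; try rfl)

lemma δ2_eq : δ2 = !![0, -1, 0, -1; 1, 0, 1, 0; 0, 1, 0, 1; -1, 0, -1, 0] := by
  ext i j
  fin_cases i <;> fin_cases j <;>
    first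
      | rfl
      | (simp [δ2, γ5_eq, γ2, Matrix.mul_apply, Fin.sum_univ_four]; try rfl)

lemma δ3_eq : δ3 = !![-I, 0, -I, 0; 0, I, 0, I; I, 0, I, 0; 0, -I, 0, -I] := by
  ext i j
  fin_cases i <;> fin_cases j <;>
    first
      | rfl
      | (simp [δ3, γ5_eq, γ3, Matrix.mul_apply, Fin.sum_univ_four]; try rfl)

lemma δ4_eq : δ4 = !![1, 0, 1, 0; 0, 1, 0, 1; -1, 0, -1, 0; 0, -1, 0, -1] := by
  ext i j
  fin_cases i <;> fin_cases j <;>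
    first
      | rfl
      | (simp [δ4, γ5_eq, γ4, Matrix.mul_apply, Fin.sum_univ_four]; try rfl)

set_option maxHeartbeats 1000000 in
lemma alg (u v0 v1 v2 v3 : Fin 4 → ℂ) (a0 a1 a2 a3 κ : ℝ)
    (h : γ1.mulVec (v1 - (I * (a1 : ℂ)) • u) + γ2.mulVec (v2 - (I * (a2 : ℂ)) • u)
      + γ3.mulVec (v3 - (I * (a3 : ℂ)) • u) - I • γ4.mulVec (v0 + (I * (a0 : ℂ)) • u)
      + (κ : ℂ) • u = 0) :
    2 * (a0 : ℂ) * qc δ4 u + 2 * (κ : ℂ) * (star u ⬝ᵥ u)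
      = -(star (v1) ⬝ᵥ δ1.mulVec u + star u ⬝ᵥ δ1.mulVec v1)
        - (star (v2) ⬝ᵥ δ2.mulVec u + star u ⬝ᵥ δ2.mulVec v2)
        - (star (v3) ⬝ᵥ δ3.mulVec u + star u ⬝ᵥ δ3.mulVec v3)
        + I * (star u ⬝ᵥ δ4.mulVec (v0) - star (v0) ⬝ᵥ δ4.mulVec u) := by
  have h0 := congrFun h 0
  have h1 := congrFun h 1
  have h2 := congrFun h 2
  have h3 := congrFun h 3
  simp only [Pi.add_apply, Pi.sub_apply, Pi.smul_apply, smul_eq_mul, Pi.zero_apply] at h0 h1 h2 h3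
  simp [γ1, γ2, γ3, γ4, Matrix.mulVec, dotProduct, Fin.sum_univ_four] at h0 h1 h2 h3
  have c0 := congrArg (starRingEnd ℂ) h0
  have c1 := congrArg (starRingEnd ℂ) h1
  have c2 := congrArg (starRingEnd ℂ) h2
  have c3 := congrArg (starRingEnd ℂ) h3
  simp only [map_add, map_sub, _root_.map_mul, map_neg, map_zero, Complex.conj_I,
    Complex.conj_ofReal] at c0 c1 c2 c3
  simp [qc, δ1_eq, δ2_eq, δ3_eq, δ4_eq, Matrix.mulVec, dotProduct,
    Fin.sum_univ_four, Pi.star_apply, RCLike.star_def]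
  linear_combination
    ((starRingEnd ℂ) (u 0) - (starRingEnd ℂ) (u 2)) * h0
    + ((starRingEnd ℂ) (u 1) - (starRingEnd ℂ) (u 3)) * h1
    + ((starRingEnd ℂ) (u 2) - (starRingEnd ℂ) (u 0)) * h2
    + ((starRingEnd ℂ) (u 3) - (starRingEnd ℂ) (u 1)) * h3
    + (u 0 + u 2) * c0 + (u 1 + u 3) * c1 + (u 0 + u 2) * c2 + (u 1 + u 3) * c3
    + (2 * (a0 : ℂ) * (((starRingEnd ℂ) (u 0) - (starRingEnd ℂ) (u 2)) * (u 0 + u 2)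
        + ((starRingEnd ℂ) (u 1) - (starRingEnd ℂ) (u 3)) * (u 1 + u 3))) * Complex.I_sq

lemma pd_apply (Ψ : (Fin 4 → ℝ) → Fin 4 → ℂ) (hΨ : Differentiable ℝ Ψ)
    (μ : Fin 4) (x : Fin 4 → ℝ) (i : Fin 4) :
    fderiv ℝ (fun y => Ψ y i) x (Pi.single μ 1) = pd μ Ψ x i := by
  rw [show (fun y => Ψ y i)
      = (ContinuousLinearMap.proj i (R := ℝ) (φ := fun _ : Fin 4 => ℂ)) ∘ Ψ from rfl,
    fderiv_comp _ (ContinuousLinearMap.proj i).differentiableAt (hΨ x)]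
  simp [pd]

lemma pds_qc (M : Matrix (Fin 4) (Fin 4) ℂ) (Ψ : (Fin 4 → ℝ) → Fin 4 → ℂ)
    (hΨ : Differentiable ℝ Ψ) (μ : Fin 4) (x : Fin 4 → ℝ) :
    pds μ (fun y => qc M (Ψ y)) x
      = star (pd μ Ψ x) ⬝ᵥ M.mulVec (Ψ x) + star (Ψ x) ⬝ᵥ M.mulVec (pd μ Ψ x) := by
  have hcomp : ∀ i : Fin 4, Differentiable ℝ (fun y => Ψ y i) := fun i =>
    (ContinuousLinearMap.proj i (R := ℝ) (φ := fun _ : Fin 4 => ℂ)).differentiable.comp hΨ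
  have hconj : ∀ i : Fin 4, Differentiable ℝ (fun y => (starRingEnd ℂ) (Ψ y i)) := fun i =>
    Complex.conjCLE.differentiable.comp (hcomp i)
  have hconjd : ∀ i : Fin 4,
      fderiv ℝ (fun y => (starRingEnd ℂ) (Ψ y i)) x (Pi.single μ 1)
        = (starRingEnd ℂ) (pd μ Ψ x i) := by
    intro i
    rw [show (fun y => (starRingEnd ℂ) (Ψ y i))
        = (Complex.conjCLE : ℂ →L[ℝ] ℂ) ∘ (fun y => Ψ y i) from rfl,
      fderiv_comp _ (Complex.conjCLE : ℂ →L[ℝ] ℂ).differentiableAt (hcomp i x)]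
    rw [ContinuousLinearMap.fderiv]; simp [ContinuousLinearEquiv.fderiv, pd_apply Ψ hΨ μ x i]
  have hterm : ∀ i j : Fin 4,
      fderiv ℝ (fun y => (starRingEnd ℂ) (Ψ y i) * (M i j * Ψ y j)) x (Pi.single μ 1)
        = (starRingEnd ℂ) (pd μ Ψ x i) * (M i j * Ψ x j)
          + (starRingEnd ℂ) (Ψ x i) * (M i j * pd μ Ψ x j) := by
    intro i j
    have hgj : fderiv ℝ (fun y => M i j * Ψ y j) x (Pi.single μ 1) = M i j * pd μ Ψ x j := by
      rw [fderiv_const_mul (hcomp j x)]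
      simp [pd_apply Ψ hΨ μ x j]
    rw [fderiv_fun_mul (hconj i x) ((hcomp j x).const_mul _)]
    simp only [ContinuousLinearMap.add_apply, ContinuousLinearMap.smul_apply, smul_eq_mul,
      hgj, hconjd i]
    ring
  have hrw : (fun y => qc M (Ψ y))
      = fun y => ∑ i : Fin 4, ∑ j : Fin 4, (starRingEnd ℂ) (Ψ y i) * (M i j * Ψ y j) := by
    funext y
    simp [qc, dotProduct, Matrix.mulVec, Finset.mul_sum, Pi.star_apply,
      RCLike.star_def]
  have hdsum : ∀ i j : Fin 4,
      DifferentiableAt ℝ (fun y => (starRingEnd ℂ) (Ψ y i) * (M i j * Ψ y j)) x :=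
    fun i j => (hconj i x).mul ((hcomp j x).const_mul _)
  rw [pds, hrw]
  rw [fderiv_fun_sum (fun i _ => DifferentiableAt.fun_sum (fun j _ => hdsum i j))]
  simp only [ContinuousLinearMap.coe_sum', Finset.sum_apply]
  have hinner : ∀ i : Fin 4,
      fderiv ℝ (fun y => ∑ j : Fin 4, (starRingEnd ℂ) (Ψ y i) * (M i j * Ψ y j)) x
          (Pi.single μ 1)
        = ∑ j : Fin 4, ((starRingEnd ℂ) (pd μ Ψ x i) * (M i j * Ψ x j)
            + (starRingEnd ℂ) (Ψ x i) * (M i j * pd μ Ψ x j)) := by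
    intro i
    rw [fderiv_fun_sum (fun j _ => hdsum i j)]
    simp only [ContinuousLinearMap.coe_sum', Finset.sum_apply, hterm]
  simp only [hinner]
  simp only [dotProduct, Matrix.mulVec, Fin.sum_univ_four, Pi.star_apply,
    RCLike.star_def, Finset.mul_sum]
  ring

/-- for a Dirac solution Ψ,
2a₀·(Ψ*δ₄Ψ) + 2κ·(Ψ*Ψ) = −∂₁(Ψ*δ₁Ψ) − ∂₂(Ψ*δ₂Ψ) − ∂₃(Ψ*δ₃Ψ) + i·∂₀↔(Ψ*δ₄Ψ) everywhere. -/
theorem identity_a0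
    (Ψ : (Fin 4 → ℝ) → Fin 4 → ℂ)
    (a0 a1 a2 a3 : (Fin 4 → ℝ) → ℝ) (κ : ℝ)
    (hΨ : DiracSolution Ψ a0 a1 a2 a3 κ) :
    ∀ x : Fin 4 → ℝ,
      2 * (a0 x : ℂ) * qc δ4 (Ψ x) + 2 * (κ : ℂ) * (star (Ψ x) ⬝ᵥ Ψ x)
        = -pds 1 (fun y => qc δ1 (Ψ y)) x
            - pds 2 (fun y => qc δ2 (Ψ y)) x
            - pds 3 (fun y => qc δ3 (Ψ y)) x
            + I * bd 0 δ4 Ψ x := by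
  intro x
  have hd := hΨ.1
  have h := hΨ.2 x
  rw [pds_qc δ1 Ψ hd 1 x, pds_qc δ2 Ψ hd 2 x, pds_qc δ3 Ψ hd 3 x, bd]
  exact alg (Ψ x) (pd 0 Ψ x) (pd 1 Ψ x) (pd 2 Ψ x) (pd 3 Ψ x) _ _ _ _ _ h
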